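/- Let p ≥ 0 and 0 ≤ i_0 < … < i_p ≤ n. Then ∫_{[i_0,…,i_p]} ω_{i_0,…,i_p} = 1/p!, i.e. ∫_{[0,1]^p} ω_{i_0,…,i_p}(G(s))(∂G/∂s_0,…,∂G/∂s_{p−1}) ds = 1/p! where G = G_{i_0,…,i_p}. Consequently the integration map is a left inverse of the Whitney map: R(W(\widehat{[i_0,…,i_p]})) = \widehat{[i_0,…,i_p]}. -/

import Mathlib

open MeasureTheory
open scoped BigOperators

noncomputable section

/-- ℝ^{n+1} -/
abbrev Vec (n : ℕ) := Fin (n + 1) → ℝ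

/-- standard basis vector e_i -/
def eVec (n : ℕ) (i : Fin (n + 1)) : Vec n := Pi.single i 1

/-- Raw (not necessarily alternating) inhomogeneous forms: a family of
degree-`p` "forms" given as functions of a point and a `p`-tuple of vectors. -/
def MForm (n : ℕ) := (p : ℕ) → Vec n → (Fin p → Vec n) → ℝ

/-- Embed a raw `p`-form as an inhomogeneous form concentrated in degree `p`. -/
def ofDeg (n p : ℕ) (ω : Vec n → (Fin p → Vec n) → ℝ) : MForm n :=
  fun q t v => if h : q = p then ω t (fun i => v (Fin.cast h.symm i)) else 0

/-- Exterior derivative. -/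
def exd (n : ℕ) (F : MForm n) : MForm n :=
  fun q => match q with
  | 0 => fun _ _ => 0
  | (p + 1) => fun t v =>
      ∑ j : Fin (p + 1), (-1 : ℝ) ^ (j : ℕ) *
        fderiv ℝ (fun x => F p x (fun i => v (Fin.succAbove j i))) t (v j)

/-- The Dupont operator `h^i`. -/
def hOp (n : ℕ) (i : Fin (n + 1)) (F : MForm n) : MForm n :=
  fun p t v =>
    ∫ s in (0:ℝ)..1, (1 - s) ^ p *
      F (p + 1) ((1 - s) • t + s • eVec n i) (Fin.cons (eVec n i - t) v)

/-- Iterated Dupont operators `h^{i_k} ∘ ⋯ ∘ h^{i_0}`. -/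
def hTuple (n : ℕ) {m : ℕ} (c : Fin m → Fin (n + 1)) (F : MForm n) : MForm n :=
  (List.ofFn c).foldl (fun G i => hOp n i G) F

/-- The Whitney form ω_{c 0, …, c p}. -/
def whitney (n p : ℕ) (c : Fin (p + 1) → Fin (n + 1)) :
    Vec n → (Fin p → Vec n) → ℝ :=
  fun t v => ∑ l : Fin (p + 1), (-1 : ℝ) ^ (l : ℕ) * t (c l) *
    Matrix.det (Matrix.of fun a b : Fin p => v a (c (Fin.succAbove l b)))

/-- ω̄ = p! ω. -/
def whitneyBar (n p : ℕ) (c : Fin (p + 1) → Fin (n + 1)) :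
    Vec n → (Fin p → Vec n) → ℝ :=
  fun t v => (Nat.factorial p : ℝ) * whitney n p c t v

/-- Wedge of a homogeneous `k`-form with an inhomogeneous form. -/
def wedgeHom (n k : ℕ) (α : Vec n → (Fin k → Vec n) → ℝ) (G : MForm n) : MForm n :=
  fun q t v =>
    if h : k ≤ q then
      ((Nat.factorial k : ℝ) * (Nat.factorial (q - k) : ℝ))⁻¹ *
        ∑ σ : Equiv.Perm (Fin q), ((Equiv.Perm.sign σ : ℤ) : ℝ) *
          α t (fun i => v (σ (Fin.castLE h i))) *
          G (q - k) t (fun j => v (σ (Fin.cast (Nat.add_sub_cancel' h) (Fin.natAdd k j))))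
    else 0

open scoped Classical in
/-- The Dupont homotopy. -/
def sDup (n : ℕ) (F : MForm n) : MForm n :=
  fun q t v => - ∑ k ∈ Finset.range n,
    ∑ c ∈ Finset.univ.filter (fun c : Fin (k + 1) → Fin (n + 1) => StrictMono c),
      wedgeHom n k (whitneyBar n k c) (hTuple n c F) q t v

/-- The unit cube [0,1]^p. -/
def cubeSet (p : ℕ) : Set (Fin p → ℝ) := Set.univ.pi fun _ => Set.Icc (0:ℝ) 1

/-- Canonical parametrization of the simplex with vertices `verts`. -/
def GmapV (n p : ℕ) (verts : Fin (p + 1) → Vec n) : (Fin p → ℝ) → Vec n :=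
  fun s => ∑ l : Fin (p + 1),
    ((∏ b ∈ Finset.univ.filter (fun b : Fin p => (b : ℕ) < (l : ℕ)), s b) *
      (if h : (l : ℕ) < p then 1 - s ⟨l, h⟩ else 1)) • verts l

/-- Integral of a raw `p`-form over the simplex with vertices `verts`. -/
def simplexIntV (n p : ℕ) (verts : Fin (p + 1) → Vec n)
    (ω : Vec n → (Fin p → Vec n) → ℝ) : ℝ :=
  ∫ s in cubeSet p, ω (GmapV n p verts s)
      (fun a => fderiv ℝ (GmapV n p verts) s (Pi.single a 1))

/-- ∫_{[c 0, …, c p]} ω. -/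
def simplexInt (n p : ℕ) (c : Fin (p + 1) → Fin (n + 1))
    (ω : Vec n → (Fin p → Vec n) → ℝ) : ℝ :=
  simplexIntV n p (fun l => eVec n (c l)) ω

open scoped Classical in
/-- (WR)(ω) for a homogeneous raw p-form ω. -/
def WRhom (n p : ℕ) (ω : Vec n → (Fin p → Vec n) → ℝ) :
    Vec n → (Fin p → Vec n) → ℝ :=
  fun t v =>
    ∑ c ∈ Finset.univ.filter (fun c : Fin (p + 1) → Fin (n + 1) => StrictMono c),
      simplexInt n p c ω * whitneyBar n p c t v

open scoped Classical in
/-- The integration map `R`, sending an (inhomogeneous) form to the simplicial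
cochain (a function on the nonempty subsets of `{0,…,n}`) of its integrals. -/
def Rmap (n : ℕ) (F : MForm n) : Finset (Fin (n + 1)) → ℝ :=
  fun σ =>
    if h : σ.Nonempty then
      simplexInt n (σ.card - 1)
        (fun a => (σ.orderIsoOfFin
            ((Nat.succ_pred_eq_of_pos (Finset.card_pos.mpr h)).symm) a : Fin (n + 1)))
        (F (σ.card - 1))
    else 0

-- ==== auxiliary development ====
namespace WhitneyAux

open Finset

/-- single factor of the barycentric coordinate -/
def lamF (p : ℕ) (s : Fin p → ℝ) (l : Fin (p + 1)) (b : Fin p) : ℝ :=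
  if (b : ℕ) < (l : ℕ) then s b else if (b : ℕ) = (l : ℕ) then 1 - s b else 1

def lam (p : ℕ) (s : Fin p → ℝ) (l : Fin (p + 1)) : ℝ := ∏ b, lamF p s l b

def dcoef (p : ℕ) (a : Fin p) (l : Fin (p + 1)) : ℝ :=
  if (a : ℕ) < (l : ℕ) then 1 else if (a : ℕ) = (l : ℕ) then -1 else 0

def Dlam (p : ℕ) (s : Fin p → ℝ) (a : Fin p) (l : Fin (p + 1)) : ℝ :=
  (∏ b ∈ Finset.univ.erase a, lamF p s l b) * dcoef p a l

lemma lam_eq_coeff (p : ℕ) (s : Fin p → ℝ) (l : Fin (p + 1)) :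
    lam p s l =
      (∏ b ∈ Finset.univ.filter (fun b : Fin p => (b : ℕ) < (l : ℕ)), s b) *
        (if h : (l : ℕ) < p then 1 - s ⟨l, h⟩ else 1) := by
  rw [lam, ← Finset.prod_filter_mul_prod_filter_not Finset.univ
    (fun b : Fin p => (b : ℕ) < (l : ℕ))]
  congr 1
  · exact Finset.prod_congr rfl fun b hb => by
      simp only [Finset.mem_filter] at hb
      simp [lamF, hb.2]
  · by_cases h : (l : ℕ) < p
    · rw [dif_pos h]
      have key : ∏ b ∈ Finset.univ.filter (fun b : Fin p => ¬ (b : ℕ) < (l : ℕ)),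
          lamF p s l b = lamF p s l (⟨(l : ℕ), h⟩ : Fin p) := by
        refine Finset.prod_eq_single_of_mem (⟨(l : ℕ), h⟩ : Fin p) (by simp) ?_
        intro b hb hne
        simp only [Finset.mem_filter, Finset.mem_univ, true_and, not_lt] at hb
        have : (b : ℕ) ≠ (l : ℕ) := fun hbl => hne (Fin.ext hbl)
        simp [lamF, Nat.not_lt.mpr hb, this]
      rw [key]; simp [lamF]
    · rw [dif_neg h]
      refine Finset.prod_eq_one fun b hb => ?_
      simp only [Finset.mem_filter, Finset.mem_univ, true_and, not_lt] at hb
      have hblt : (b : ℕ) < p := b.isLt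
      have h1 : ¬ ((b : ℕ) < (l : ℕ)) := Nat.not_lt.mpr hb
      have h2 : (b : ℕ) ≠ (l : ℕ) := by omega
      simp [lamF, h1, h2]
lemma hasFDerivAt_lamF (p : ℕ) (s : Fin p → ℝ) (l : Fin (p + 1)) (b : Fin p) :
    HasFDerivAt (fun s : Fin p → ℝ => lamF p s l b)
      (dcoef p b l • (ContinuousLinearMap.proj b : (Fin p → ℝ) →L[ℝ] ℝ)) s := by
  unfold lamF dcoef
  by_cases h1 : (b : ℕ) < (l : ℕ)
  · simp only [if_pos h1, one_smul]
    exact (ContinuousLinearMap.proj b : (Fin p → ℝ) →L[ℝ] ℝ).hasFDerivAt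
  · by_cases h2 : (b : ℕ) = (l : ℕ)
    · simp only [if_neg h1, if_pos h2]
      have := (hasFDerivAt_const (1 : ℝ) s).sub
        (ContinuousLinearMap.proj b : (Fin p → ℝ) →L[ℝ] ℝ).hasFDerivAt
      refine this.congr_fderiv ?_
      ext w
      simp
    · simp only [if_neg h1, if_neg h2, zero_smul]
      exact hasFDerivAt_const (1 : ℝ) s

lemma hasFDerivAt_lam (p : ℕ) (s : Fin p → ℝ) (l : Fin (p + 1)) :
    HasFDerivAt (fun s : Fin p → ℝ => lam p s l)
      (∑ a : Fin p, (∏ b ∈ Finset.univ.erase a, lamF p s l b) •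
        (dcoef p a l • (ContinuousLinearMap.proj a : (Fin p → ℝ) →L[ℝ] ℝ))) s :=
  HasFDerivAt.finset_prod (fun a _ => hasFDerivAt_lamF p s l a)

lemma fderiv_lam_single (p : ℕ) (s : Fin p → ℝ) (l : Fin (p + 1)) (a : Fin p) :
    (∑ a' : Fin p, (∏ b ∈ Finset.univ.erase a', lamF p s l b) •
        (dcoef p a' l • (ContinuousLinearMap.proj a' : (Fin p → ℝ) →L[ℝ] ℝ)))
      (Pi.single a 1) = Dlam p s a l := by
  rw [ContinuousLinearMap.sum_apply]
  rw [Finset.sum_eq_single a]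
  · simp [Dlam]
  · intro b _ hb
    simp [Pi.single_eq_of_ne hb]
  · simp

lemma GmapV_eq (n p : ℕ) (verts : Fin (p + 1) → Vec n) :
    GmapV n p verts = fun s => ∑ l : Fin (p + 1), lam p s l • verts l := by
  funext s
  unfold GmapV
  exact Finset.sum_congr rfl fun l _ => by rw [lam_eq_coeff]

lemma hasFDerivAt_GmapV (n p : ℕ) (verts : Fin (p + 1) → Vec n) (s : Fin p → ℝ) :
    HasFDerivAt (GmapV n p verts)
      (∑ l : Fin (p + 1),
        (∑ a : Fin p, (∏ b ∈ Finset.univ.erase a, lamF p s l b) •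
          (dcoef p a l • (ContinuousLinearMap.proj a : (Fin p → ℝ) →L[ℝ] ℝ))).smulRight
          (verts l)) s := by
  rw [GmapV_eq]
  exact HasFDerivAt.fun_sum fun l _ => (hasFDerivAt_lam p s l).smul_const (verts l)

lemma fderiv_GmapV_single (n p : ℕ) (verts : Fin (p + 1) → Vec n) (s : Fin p → ℝ)
    (a : Fin p) :
    fderiv ℝ (GmapV n p verts) s (Pi.single a 1)
      = ∑ l : Fin (p + 1), Dlam p s a l • verts l := by
  rw [(hasFDerivAt_GmapV n p verts s).fderiv]
  rw [ContinuousLinearMap.sum_apply]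
  refine Finset.sum_congr rfl fun l _ => ?_
  rw [ContinuousLinearMap.smulRight_apply, fderiv_lam_single]

lemma eval_sum_single (n p : ℕ) (d : Fin (p + 1) → Fin (n + 1)) (f : Fin (p + 1) → ℝ)
    (i : Fin (n + 1)) (hi : ∀ m, d m ≠ i) :
    (∑ l : Fin (p + 1), f l • eVec n (d l)) i = 0 := by
  rw [Finset.sum_apply]
  refine Finset.sum_eq_zero fun l _ => ?_
  simp [eVec, Pi.single_eq_of_ne (Ne.symm (hi l))]

lemma eval_sum_single_inj (n p : ℕ) (d : Fin (p + 1) → Fin (n + 1))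
    (hd : Function.Injective d) (f : Fin (p + 1) → ℝ) (j : Fin (p + 1)) :
    (∑ l : Fin (p + 1), f l • eVec n (d l)) (d j) = f j := by
  rw [Finset.sum_apply, Finset.sum_eq_single j]
  · simp [eVec]
  · intro l _ hl
    have : d j ≠ d l := fun h => hl (hd h.symm)
    simp [eVec, Pi.single_eq_of_ne this]
  · simp

def Nmat (p : ℕ) (s : Fin p → ℝ) : Matrix (Fin (p + 1)) (Fin (p + 1)) ℝ :=
  Matrix.of (Fin.cons (lam p s) (fun a => Dlam p s a))

lemma lamF_succ_succ (p : ℕ) (s : Fin (p + 1) → ℝ) (l : Fin (p + 1)) (b : Fin p) :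
    lamF (p + 1) s l.succ b.succ = lamF p (fun i => s i.succ) l b := by
  simp [lamF, Fin.val_succ, Nat.succ_lt_succ_iff]

lemma lamF_succ_zero (p : ℕ) (s : Fin (p + 1) → ℝ) (l : Fin (p + 1)) :
    lamF (p + 1) s l.succ 0 = s 0 := by
  simp [lamF, Fin.val_succ]

lemma lamF_zero_succ (p : ℕ) (s : Fin (p + 1) → ℝ) (b : Fin p) :
    lamF (p + 1) s 0 b.succ = 1 := by
  simp [lamF, Fin.val_succ]

lemma lamF_zero_zero (p : ℕ) (s : Fin (p + 1) → ℝ) :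
    lamF (p + 1) s 0 0 = 1 - s 0 := by
  simp [lamF]

lemma lam_zero' (p : ℕ) (s : Fin (p + 1) → ℝ) : lam (p + 1) s 0 = 1 - s 0 := by
  rw [lam, Fin.prod_univ_succ, lamF_zero_zero]
  rw [Finset.prod_eq_one fun b _ => lamF_zero_succ p s b, mul_one]

lemma lam_succ (p : ℕ) (s : Fin (p + 1) → ℝ) (l : Fin (p + 1)) :
    lam (p + 1) s l.succ = s 0 * lam p (fun i => s i.succ) l := by
  rw [lam, Fin.prod_univ_succ, lamF_succ_zero]
  congr 1
  exact Finset.prod_congr rfl fun b _ => lamF_succ_succ p s l b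

lemma prod_erase_zero {p : ℕ} (F : Fin (p + 1) → ℝ) :
    ∏ b ∈ Finset.univ.erase (0 : Fin (p + 1)), F b = ∏ b : Fin p, F b.succ := by
  have h0 : (Finset.univ : Finset (Fin (p + 1))).erase 0
      = Finset.univ.map ⟨Fin.succ, Fin.succ_injective p⟩ := by
    ext x
    simp only [Finset.mem_erase, Finset.mem_univ, and_true, Finset.mem_map,
      Function.Embedding.coeFn_mk]
    constructor
    · intro hx
      exact ⟨x.pred hx, by simp⟩
    · rintro ⟨y, _, rfl⟩
      exact Fin.succ_ne_zero y
  rw [h0, Finset.prod_map]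
  rfl

lemma prod_erase_succ {p : ℕ} (F : Fin (p + 1) → ℝ) (a : Fin p) :
    ∏ b ∈ Finset.univ.erase a.succ, F b
      = F 0 * ∏ b ∈ Finset.univ.erase a, F b.succ := by
  have h1 : ∏ b ∈ Finset.univ.erase a.succ, F b
      = ∏ b : Fin (p + 1), Function.update F a.succ 1 b := by
    rw [Finset.prod_update_of_mem (Finset.mem_univ _), one_mul, Finset.erase_eq]
  rw [h1, Fin.prod_univ_succ, Function.update_of_ne (Fin.succ_ne_zero a).symm]
  congr 1
  have h2 : ∏ b ∈ Finset.univ.erase a, F b.succ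
      = ∏ b : Fin p, Function.update (fun b : Fin p => F b.succ) a 1 b := by
    rw [Finset.prod_update_of_mem (Finset.mem_univ _), one_mul, Finset.erase_eq]
  rw [h2]
  refine Finset.prod_congr rfl fun b _ => ?_
  by_cases hb : b = a
  · subst hb; simp
  · rw [Function.update_of_ne (fun h => hb (Fin.succ_injective _ h)),
      Function.update_of_ne hb]

lemma Dlam_zero_zero (p : ℕ) (s : Fin (p + 1) → ℝ) :
    Dlam (p + 1) s 0 0 = -1 := by
  rw [Dlam, prod_erase_zero]
  simp [dcoef, lamF_zero_succ]

lemma Dlam_zero_succ (p : ℕ) (s : Fin (p + 1) → ℝ) (l : Fin (p + 1)) :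
    Dlam (p + 1) s 0 l.succ = lam p (fun i => s i.succ) l := by
  rw [Dlam, prod_erase_zero]
  have : dcoef (p + 1) 0 l.succ = 1 := by simp [dcoef]
  rw [this, mul_one, lam]
  exact Finset.prod_congr rfl fun b _ => lamF_succ_succ p s l b

lemma dcoef_succ_succ (p : ℕ) (a : Fin p) (l : Fin (p + 1)) :
    dcoef (p + 1) a.succ l.succ = dcoef p a l := by
  simp [dcoef, Fin.val_succ, Nat.succ_lt_succ_iff]

lemma Dlam_succ_zero (p : ℕ) (s : Fin (p + 1) → ℝ) (a : Fin p) :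
    Dlam (p + 1) s a.succ 0 = 0 := by
  rw [Dlam]
  have : dcoef (p + 1) a.succ 0 = 0 := by simp [dcoef, Fin.val_succ]
  rw [this, mul_zero]

lemma Dlam_succ_succ (p : ℕ) (s : Fin (p + 1) → ℝ) (a : Fin p) (l : Fin (p + 1)) :
    Dlam (p + 1) s a.succ l.succ = s 0 * Dlam p (fun i => s i.succ) a l := by
  rw [Dlam, prod_erase_succ, lamF_succ_zero, dcoef_succ_succ, Dlam]
  rw [Finset.prod_congr rfl fun b _ => lamF_succ_succ p s l b]
  ring

lemma det_Nmat (p : ℕ) (s : Fin p → ℝ) :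
    (Nmat p s).det = ∏ a : Fin p, s a ^ (p - 1 - (a : ℕ)) := by
  induction p with
  | zero =>
    rw [Matrix.det_fin_one]
    simp [Nmat, lam]
  | succ p ih =>
    have h01 : (0 : Fin (p + 2)) ≠ 1 := Fin.ne_of_val_ne (by simp)
    rw [← Matrix.det_updateRow_add_smul_self (Nmat (p + 1) s) h01 (-(s 0))]
    have hrow : (Nmat (p + 1) s) 0 + (-(s 0)) • (Nmat (p + 1) s) 1
        = Pi.single (0 : Fin (p + 2)) 1 := by
      funext j
      induction j using Fin.cases with
      | zero =>
        show lam (p + 1) s 0 + (-(s 0)) * Dlam (p + 1) s 0 0 = _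
        rw [lam_zero', Dlam_zero_zero, Pi.single_eq_same]
        ring
      | succ j =>
        show lam (p + 1) s j.succ + (-(s 0)) * Dlam (p + 1) s 0 j.succ = _
        rw [lam_succ, Dlam_zero_succ, Pi.single_eq_of_ne (Fin.succ_ne_zero j)]
        ring
    rw [hrow]
    rw [Matrix.det_succ_row_zero]
    rw [Finset.sum_eq_single (0 : Fin (p + 2))]
    · have hsub : (((Nmat (p + 1) s).updateRow 0 (Pi.single 0 1)).submatrix
            Fin.succ (Fin.succAbove 0))
          = (Matrix.diagonal (Fin.cons 1 (fun _ => s 0))) * Nmat p (fun i => s i.succ) := by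
        rw [Fin.succAbove_zero]
        ext a j
        rw [Matrix.diagonal_mul]
        induction a using Fin.cases with
        | zero =>
          show ((Nmat (p + 1) s).updateRow 0 (Pi.single 0 1)) (Fin.succ 0) j.succ = _
          rw [Matrix.updateRow_ne (Fin.succ_ne_zero 0)]
          show Dlam (p + 1) s 0 j.succ = _
          rw [Dlam_zero_succ]
          simp [Nmat]
        | succ a =>
          show ((Nmat (p + 1) s).updateRow 0 (Pi.single 0 1)) a.succ.succ j.succ = _
          rw [Matrix.updateRow_ne (Fin.succ_ne_zero a.succ)]
          show Dlam (p + 1) s a.succ j.succ = _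
          rw [Dlam_succ_succ]
          simp [Nmat]
      rw [hsub, Matrix.det_mul, Matrix.det_diagonal, ih]
      rw [Fin.prod_univ_succ, Fin.prod_univ_succ]
      simp only [Fin.cons_zero, Fin.cons_succ, Fin.val_zero, pow_zero,
        Matrix.updateRow_apply, if_pos rfl, Pi.single_eq_same]
      rw [Finset.prod_const]
      have hc : ((Finset.univ : Finset (Fin p)).card) = p := by simp
      rw [hc]
      have hpow : ∀ a : Fin p, p - 1 - (a : ℕ) = p + 1 - 1 - ((a.succ : Fin (p+1)) : ℕ) := by
        intro a
        simp [Fin.val_succ]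
        omega
      rw [Finset.prod_congr rfl fun a _ => by rw [hpow a]]
      have hp0 : p + 1 - 1 - 0 = p := by omega
      rw [hp0]
      norm_num
    · intro j _ hj
      rw [Matrix.updateRow_apply, if_pos rfl, Pi.single_eq_of_ne hj]
      ring
    · simp

lemma whitney_diag (n p : ℕ) (c : Fin (p + 1) → Fin (n + 1)) (hc : Function.Injective c)
    (s : Fin p → ℝ) :
    whitney n p c (GmapV n p (fun l => eVec n (c l)) s)
      (fun a => fderiv ℝ (GmapV n p (fun l => eVec n (c l))) s (Pi.single a 1))
      = (Nmat p s).det := by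
  rw [Matrix.det_succ_row_zero, whitney]
  refine Finset.sum_congr rfl fun l _ => ?_
  have ht : GmapV n p (fun l => eVec n (c l)) s (c l) = lam p s l := by
    rw [GmapV_eq]
    exact eval_sum_single_inj n p c hc _ l
  have hN0 : Nmat p s 0 l = lam p s l := rfl
  rw [ht, hN0]
  congr 1
  congr 1
  ext a b
  show fderiv ℝ (GmapV n p (fun l => eVec n (c l))) s (Pi.single a 1) (c (l.succAbove b)) = _
  rw [fderiv_GmapV_single]
  rw [eval_sum_single_inj n p c hc _ (l.succAbove b)]
  rfl

lemma prod_fin_sub (p : ℕ) : ∏ a : Fin p, (p - (a : ℕ)) = Nat.factorial p := by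
  rw [Fin.prod_univ_eq_prod_range (fun a => p - a) p]
  induction p with
  | zero => simp
  | succ p ih =>
    rw [Finset.prod_range_succ']
    have h1 : ∀ i, p + 1 - (i + 1) = p - i := fun i => by omega
    rw [Finset.prod_congr rfl fun i _ => h1 i, ih]
    simp [Nat.factorial_succ, Nat.mul_comm]

lemma integral_Icc_pow (k : ℕ) :
    ∫ x in Set.Icc (0:ℝ) 1, x ^ k = ((k : ℝ) + 1)⁻¹ := by
  rw [MeasureTheory.integral_Icc_eq_integral_Ioc,
    ← intervalIntegral.integral_of_le (zero_le_one), integral_pow]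
  simp

lemma integral_det_Nmat (p : ℕ) :
    (∫ s in cubeSet p, (Nmat p s).det) = 1 / (Nat.factorial p : ℝ) := by
  have hmeas : MeasurableSet (cubeSet p) :=
    MeasurableSet.univ_pi fun _ => measurableSet_Icc
  have step1 : (∫ s in cubeSet p, (Nmat p s).det)
      = ∫ s in cubeSet p, ∏ a : Fin p, s a ^ (p - 1 - (a : ℕ)) := by
    congr 1; funext s; exact det_Nmat p s
  rw [step1, ← MeasureTheory.integral_indicator hmeas]
  have step2 : (cubeSet p).indicator (fun s => ∏ a : Fin p, s a ^ (p - 1 - (a : ℕ)))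
      = fun s => ∏ a : Fin p,
          (Set.Icc (0:ℝ) 1).indicator (fun x => x ^ (p - 1 - (a : ℕ))) (s a) := by
    funext s
    by_cases hs : s ∈ cubeSet p
    · rw [Set.indicator_of_mem hs]
      refine Finset.prod_congr rfl fun a _ => ?_
      have ha : s a ∈ Set.Icc (0:ℝ) 1 := by
        have := hs
        rw [cubeSet, Set.mem_univ_pi] at this
        exact this a
      rw [Set.indicator_of_mem ha]
    · rw [Set.indicator_of_notMem hs]
      have : ∃ a : Fin p, s a ∉ Set.Icc (0:ℝ) 1 := by
        by_contra hcon
        push_neg at hcon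
        exact hs (by rw [cubeSet, Set.mem_univ_pi]; exact hcon)
      obtain ⟨a, ha⟩ := this
      symm
      refine Finset.prod_eq_zero (Finset.mem_univ a) ?_
      rw [Set.indicator_of_notMem ha]
  rw [step2,
    MeasureTheory.integral_fintype_prod_volume_eq_prod
      (fun (a : Fin p) => (Set.Icc (0:ℝ) 1).indicator (fun x => x ^ (p - 1 - (a : ℕ))))]
  have step3 : ∀ a : Fin p,
      (∫ x, (Set.Icc (0:ℝ) 1).indicator (fun x => x ^ (p - 1 - (a : ℕ))) x)
        = ((p : ℝ) - (a : ℕ))⁻¹ := by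
    intro a
    rw [MeasureTheory.integral_indicator measurableSet_Icc, integral_Icc_pow]
    congr 1
    have : p - 1 - (a : ℕ) + 1 = p - (a : ℕ) := by omega
    rw [show ((p - 1 - (a : ℕ) : ℕ) : ℝ) + 1 = ((p - 1 - (a : ℕ) + 1 : ℕ) : ℝ) by push_cast; ring,
      this]
    have hap : (a : ℕ) ≤ p := le_of_lt a.isLt
    push_cast [Nat.cast_sub hap]
    ring
  rw [Finset.prod_congr rfl fun a _ => step3 a]
  rw [Finset.prod_inv_distrib]
  rw [one_div]
  congr 1
  have : ∀ a : Fin p, ((p : ℝ) - (a : ℕ)) = ((p - (a : ℕ) : ℕ) : ℝ) := by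
    intro a
    have hap : (a : ℕ) ≤ p := le_of_lt a.isLt
    push_cast [Nat.cast_sub hap]
    ring
  rw [Finset.prod_congr rfl fun a _ => this a, ← Nat.cast_prod, prod_fin_sub]

lemma simplexInt_whitney_diag (n p : ℕ) (c : Fin (p + 1) → Fin (n + 1))
    (hc : Function.Injective c) :
    simplexInt n p c (whitney n p c) = 1 / (Nat.factorial p : ℝ) := by
  rw [simplexInt, simplexIntV, ← integral_det_Nmat p]
  congr 1
  funext s
  exact whitney_diag n p c hc s

lemma simplexInt_whitneyBar_diag (n p : ℕ) (c : Fin (p + 1) → Fin (n + 1))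
    (hc : Function.Injective c) :
    simplexInt n p c (whitneyBar n p c) = 1 := by
  have h1 : simplexInt n p c (whitneyBar n p c)
      = (Nat.factorial p : ℝ) * simplexInt n p c (whitney n p c) := by
    rw [simplexInt, simplexIntV, simplexInt, simplexIntV, ← MeasureTheory.integral_const_mul]
    rfl
  rw [h1, simplexInt_whitney_diag n p c hc]
  rw [mul_one_div, div_self (Nat.cast_ne_zero.mpr (Nat.factorial_ne_zero p))]

lemma simplexInt_whitneyBar_offdiag (n p : ℕ) (c d : Fin (p + 1) → Fin (n + 1))
    (j : Fin (p + 1)) (hj : ∀ m, d m ≠ c j) :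
    simplexInt n p d (whitneyBar n p c) = 0 := by
  rw [simplexInt, simplexIntV]
  have hzero : (fun s : Fin p → ℝ => whitneyBar n p c (GmapV n p (fun l => eVec n (d l)) s)
      (fun a => fderiv ℝ (GmapV n p (fun l => eVec n (d l))) s (Pi.single a 1)))
      = fun _ => (0 : ℝ) := by
    funext s
    rw [whitneyBar]
    have hw : whitney n p c (GmapV n p (fun l => eVec n (d l)) s)
        (fun a => fderiv ℝ (GmapV n p (fun l => eVec n (d l))) s (Pi.single a 1)) = 0 := by
      rw [whitney]
      refine Finset.sum_eq_zero fun l _ => ?_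
      by_cases hl : l = j
      · subst hl
        have ht : GmapV n p (fun l => eVec n (d l)) s (c l) = 0 := by
          rw [GmapV_eq]
          exact eval_sum_single n p d _ (c l) hj
        rw [ht]
        ring
      · obtain ⟨b0, hb0⟩ := Fin.exists_succAbove_eq (Ne.symm hl)
        have hdet : (Matrix.of fun a b : Fin p =>
            fderiv ℝ (GmapV n p (fun l => eVec n (d l))) s (Pi.single a 1)
              (c (l.succAbove b))).det = 0 := by
          apply Matrix.det_eq_zero_of_column_eq_zero b0
          intro a
          show fderiv ℝ (GmapV n p (fun l => eVec n (d l))) s (Pi.single a 1)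
            (c (l.succAbove b0)) = 0
          rw [hb0, fderiv_GmapV_single]
          exact eval_sum_single n p d _ (c j) hj
        rw [hdet]
        ring
    rw [hw, mul_zero]
  rw [hzero]
  simp

lemma ofDeg_self (n p : ℕ) (ω : Vec n → (Fin p → Vec n) → ℝ) :
    ofDeg n p ω p = ω := by
  funext t v
  rw [ofDeg, dif_pos rfl]
  rfl

lemma simplexInt_ofDeg_ne (n p q : ℕ) (d : Fin (q + 1) → Fin (n + 1))
    (hq : q ≠ p) (ω : Vec n → (Fin p → Vec n) → ℝ) :
    simplexInt n q d (ofDeg n p ω q) = 0 := by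
  rw [simplexInt, simplexIntV]
  have : (fun s : Fin q → ℝ => ofDeg n p ω q (GmapV n q (fun l => eVec n (d l)) s)
      (fun a => fderiv ℝ (GmapV n q (fun l => eVec n (d l))) s (Pi.single a 1)))
      = fun _ => (0 : ℝ) := by
    funext s
    rw [ofDeg, dif_neg hq]
  rw [this]
  simp

lemma simplexInt_ofDeg_cast (n p q : ℕ) (hq : q = p)
    (d : Fin (q + 1) → Fin (n + 1)) (d2 : Fin (p + 1) → Fin (n + 1))
    (hd : ∀ a : Fin (p + 1), d2 a = d ⟨a.val, by omega⟩)
    (ω : Vec n → (Fin p → Vec n) → ℝ) :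
    simplexInt n q d (ofDeg n p ω q) = simplexInt n p d2 ω := by
  subst hq
  have hdd : d2 = d := by
    funext a
    rw [hd a]
  rw [hdd, ofDeg_self]

end WhitneyAux

theorem integral_whitney_self (n p : ℕ)
    (c : Fin (p + 1) → Fin (n + 1)) (hc : StrictMono c) :
    simplexInt n p c (whitney n p c) = 1 / (Nat.factorial p : ℝ)
    ∧ ∀ σ : Finset (Fin (n + 1)),
        Rmap n (ofDeg n p (whitneyBar n p c)) σ
          = if σ = Finset.image c Finset.univ then 1 else 0 := by
  have hcinj : Function.Injective c := hc.injective
  constructor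
  · exact WhitneyAux.simplexInt_whitney_diag n p c hcinj
  · intro σ
    by_cases hσ : σ.Nonempty
    · simp only [Rmap]
      rw [dif_pos hσ]
      set d : Fin (σ.card - 1 + 1) → Fin (n + 1) := fun a =>
        (σ.orderIsoOfFin ((Nat.succ_pred_eq_of_pos (Finset.card_pos.mpr hσ)).symm) a
          : Fin (n + 1)) with hd
      by_cases hq : σ.card - 1 = p
      · have hcard : σ.card = p + 1 := by
          have := Finset.card_pos.mpr hσ; omega
        have hrw := WhitneyAux.simplexInt_ofDeg_cast n p (σ.card - 1) hq d
          (fun a => d ⟨a.val, by omega⟩) (fun a => rfl) (whitneyBar n p c)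
        rw [hrw]
        set f : Fin (p + 1) → Fin (n + 1) := fun a => d ⟨a.val, by omega⟩ with hf
        have hfmem : ∀ a, f a ∈ σ := by
          intro a
          rw [hf, hd]
          simp only [Finset.coe_orderIsoOfFin_apply]
          exact Finset.orderEmbOfFin_mem σ _ _
        have hfmono : StrictMono f := by
          intro a b hab
          rw [hf, hd]
          simp only [Finset.coe_orderIsoOfFin_apply]
          exact (σ.orderEmbOfFin _).strictMono (Fin.mk_lt_mk.mpr hab)
        have hfeq : f = fun i => σ.orderEmbOfFin hcard i :=
          Finset.orderEmbOfFin_unique hcard hfmem hfmono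
        by_cases hσc : σ = Finset.image c Finset.univ
        · have hcmem : ∀ x, c x ∈ σ := fun x => by
            rw [hσc]; exact Finset.mem_image_of_mem c (Finset.mem_univ x)
          have hceq : c = fun i => σ.orderEmbOfFin hcard i :=
            Finset.orderEmbOfFin_unique hcard hcmem hc
          rw [if_pos hσc, hfeq, ← hceq]
          exact WhitneyAux.simplexInt_whitneyBar_diag n p c hcinj
        · rw [if_neg hσc]
          have hex : ∃ j, c j ∉ σ := by
            by_contra hcon
            push_neg at hcon
            have hsub : Finset.image c Finset.univ ⊆ σ :=
              Finset.image_subset_iff.mpr fun x _ => hcon x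
            have hle : σ.card ≤ (Finset.image c Finset.univ).card := by
              rw [Finset.card_image_of_injective _ hcinj, Finset.card_univ,
                Fintype.card_fin]
              omega
            exact hσc ((Finset.eq_of_subset_of_card_le hsub hle).symm)
          obtain ⟨j, hjσ⟩ := hex
          exact WhitneyAux.simplexInt_whitneyBar_offdiag n p c f j
            (fun m hm => hjσ (hm ▸ hfmem m))
      · rw [WhitneyAux.simplexInt_ofDeg_ne n p (σ.card - 1) _ hq]
        rw [if_neg]
        intro hσc
        apply hq
        rw [hσc, Finset.card_image_of_injective _ hcinj, Finset.card_univ,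
          Fintype.card_fin]
        omega
    · simp only [Rmap]
      rw [dif_neg hσ, if_neg]
      intro h
      apply hσ
      rw [h]
      exact ⟨c 0, Finset.mem_image_of_mem c (Finset.mem_univ 0)⟩

end
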